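/- arXiv:1910.05966 — 6 statements merged into one kernel-verified Lean document; each statement's English description precedes it below -/
import Mathlib

section
/- Let G be a connected d-regular graph on n vertices with normalized adjacency operator A and smallest eigenvalue λ_n. If S ⊆ V is an independent set with |S|/n = (−λ_n)/(1 − λ_n) (the Hoffman bound is attained), then the characteristic function 1_S is a linear combination of the constant function and a single eigenfunction of A with eigenvalue λ_n. -/
open Matrix Finset

/-- If the Hoffman bound is attained by an independent set `S`, then `1_S` is a linear
combination of the constant function and a single eigenfunction with eigenvalue `lam`. -/
theorem hoffman_sharp_extremal_design {V : Type*} [Fintype V] [DecidableEq V]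
    (G : SimpleGraph V) [DecidableRel G.Adj] (d : ℕ)
    (hreg : G.IsRegularOfDegree d) (hconn : G.Connected)
    (A : Matrix V V ℝ) (hA : A = (d : ℝ)⁻¹ • G.adjMatrix ℝ)
    (lam : ℝ)
    (hEig : ∃ f : V → ℝ, f ≠ 0 ∧ A.mulVec f = lam • f)
    (hMin : ∀ μ : ℝ, (∃ f : V → ℝ, f ≠ 0 ∧ A.mulVec f = μ • f) → lam ≤ μ)
    (S : Finset V) (hS : ∀ u ∈ S, ∀ v ∈ S, ¬ G.Adj u v)
    (hSharp : (S.card : ℝ) / (Fintype.card V : ℝ) = (-lam) / (1 - lam)) :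
    ∃ (c₁ c₂ : ℝ) (f : V → ℝ), f ≠ 0 ∧ A.mulVec f = lam • f ∧
      ∀ v, (if v ∈ S then (1 : ℝ) else 0) = c₁ + c₂ * f v := by
  classical
  by_cases hSe : S = ∅
  · obtain ⟨f, hf, hfe⟩ := hEig
    exact ⟨0, 0, f, hf, hfe, fun v => by simp [hSe]⟩
  by_cases hSu : S = Finset.univ
  · obtain ⟨f, hf, hfe⟩ := hEig
    exact ⟨1, 0, f, hf, hfe, fun v => by simp [hSu]⟩
  -- main case
  have hnV : Nonempty V := hconn.nonempty
  have hn0 : (0:ℝ) < (Fintype.card V : ℝ) := by exact_mod_cast Fintype.card_pos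
  have hs0 : 0 < S.card := Finset.card_pos.mpr (Finset.nonempty_of_ne_empty hSe)
  set n : ℝ := (Fintype.card V : ℝ) with hn
  set s : ℝ := (S.card : ℝ) with hsdef
  set α : ℝ := s / n with hαdef
  have hα0 : 0 < α := by
    rw [hαdef]
    exact div_pos (by rw [hsdef]; exact_mod_cast hs0) hn0
  have hsn : S.card < Fintype.card V := by
    rcases lt_or_eq_of_le (Finset.card_le_univ S) with h | h
    · simpa using h
    · exact absurd (Finset.eq_univ_of_card S (by simpa using h)) hSu
  have hlam1 : (1:ℝ) - lam ≠ 0 := by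
    intro h
    rw [show lam = 1 by linarith] at hSharp
    norm_num at hSharp
    rw [hSharp] at hα0
    norm_num at hα0
  -- the key algebraic identity from sharpness
  have hkey : α * (1 - lam) = -lam := by
    rw [hSharp, div_mul_cancel₀ _ hlam1]
  -- d > 0
  have hd0 : (0:ℝ) < (d:ℝ) := by
    have h2 : 1 < Fintype.card V := lt_of_le_of_lt hs0 hsn
    obtain ⟨u, v, huv⟩ := Fintype.exists_pair_of_one_lt_card h2
    obtain ⟨w⟩ := hconn u v
    have hadj : ∃ z, G.Adj u z := by
      cases w with
      | nil => exact absurd rfl huv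
      | cons h p => exact ⟨_, h⟩
    have : 0 < G.degree u := (G.degree_pos_iff_exists_adj u).mpr hadj
    rw [hreg u] at this
    exact_mod_cast this
  -- the candidate eigenfunction
  set χ : V → ℝ := fun v => if v ∈ S then 1 else 0 with hχ
  set x : V → ℝ := fun v => χ v - α with hx
  set B : Matrix V V ℝ := G.adjMatrix ℝ with hB
  have hxeq : x = χ - α • (fun _ => (1:ℝ)) := by funext v; simp [hx]
  have hχsum : ∑ v, χ v = s := by simp [hχ, hsdef]
  have hsα : s = α * n := by rw [hαdef, div_mul_cancel₀ _ (ne_of_gt hn0)]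
  -- dot products
  have hq1 : χ ⬝ᵥ (B *ᵥ χ) = 0 := by
    rw [dotProduct]
    apply Finset.sum_eq_zero
    intro v _
    by_cases hv : v ∈ S
    · have hinner : (B *ᵥ χ) v = 0 := by
        rw [hB, SimpleGraph.adjMatrix_mulVec_apply]
        apply Finset.sum_eq_zero
        intro u hu
        rw [SimpleGraph.mem_neighborFinset] at hu
        have : u ∉ S := fun huS => hS v hv u huS hu
        simp [hχ, this]
      rw [hinner, mul_zero]
    · simp [hχ, hv]
  have hB1 : (B *ᵥ fun _ => (1:ℝ)) = fun _ => (d:ℝ) := by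
    funext v
    have := SimpleGraph.adjMatrix_mulVec_const_apply_of_regular
      (α := ℝ) (a := (1:ℝ)) hreg (v := v)
    simpa [hB, Function.const] using this
  have hvec : (fun _ => (1:ℝ)) ᵥ* B = fun v => (d:ℝ) := by
    funext v
    rw [hB, SimpleGraph.adjMatrix_vecMul_apply]
    simp [hreg v]
  have hq2 : (fun _ => (1:ℝ)) ⬝ᵥ (B *ᵥ χ) = d * s := by
    rw [dotProduct_mulVec, hvec, dotProduct, ← Finset.mul_sum, hχsum]
  have hq3 : χ ⬝ᵥ (B *ᵥ fun _ => (1:ℝ)) = d * s := by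
    rw [hB1, dotProduct]
    rw [show ∑ v, χ v * (d:ℝ) = (∑ v, χ v) * d from (Finset.sum_mul ..).symm]
    rw [hχsum, mul_comm]
  have hq4 : (fun _ => (1:ℝ)) ⬝ᵥ (B *ᵥ fun _ => (1:ℝ)) = d * n := by
    rw [hB1, dotProduct]
    simp [hn, mul_comm]
  have hχχ : χ ⬝ᵥ χ = s := by
    rw [dotProduct, ← hχsum]
    apply Finset.sum_congr rfl
    intro v _
    by_cases hv : v ∈ S <;> simp [hχ, hv]
  have hχ1 : χ ⬝ᵥ (fun _ => (1:ℝ)) = s := by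
    rw [dotProduct]; simpa using hχsum
  have h1χ : (fun _ => (1:ℝ)) ⬝ᵥ χ = s := by
    rw [dotProduct]; simpa using hχsum
  have h11 : ((fun _ => (1:ℝ)) : V → ℝ) ⬝ᵥ ((fun _ => (1:ℝ)) : V → ℝ) = n := by
    show (∑ v : V, (1:ℝ) * 1) = n
    simp [hn]
  -- quadratic forms
  have hxBx : x ⬝ᵥ (B *ᵥ x) = -((d:ℝ) * (α^2 * n)) := by
    rw [hxeq, mulVec_sub, mulVec_smul, sub_dotProduct, smul_dotProduct,
      dotProduct_sub, dotProduct_sub, dotProduct_smul, dotProduct_smul,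
      hq1, hq2, hq3, hq4, hsα]
    simp only [smul_eq_mul]
    ring
  have hxx : x ⬝ᵥ x = α * (1 - α) * n := by
    rw [hxeq, sub_dotProduct, smul_dotProduct, dotProduct_sub, dotProduct_sub,
      dotProduct_smul, dotProduct_smul, hχχ, hχ1, h1χ, h11, hsα]
    simp only [smul_eq_mul]
    ring
  have hxAx : x ⬝ᵥ (A *ᵥ x) = -(α^2 * n) := by
    rw [hA, smul_mulVec, dotProduct_smul, hxBx, smul_eq_mul]
    have hdne : (d:ℝ) ≠ 0 := ne_of_gt hd0
    field_simp
  -- the shifted matrix is PSD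
  set M : Matrix V V ℝ := A - lam • (1 : Matrix V V ℝ) with hMdef
  have hAt : Aᵀ = A := by
    rw [hA, transpose_smul, SimpleGraph.transpose_adjMatrix]
  have hMh : M.IsHermitian := by
    have ht : Mᵀ = M := by
      rw [hMdef, transpose_sub, transpose_smul, transpose_one, hAt]
    rw [Matrix.IsHermitian, conjTranspose_eq_transpose_of_trivial, ht]
  have hev : ∀ i, 0 ≤ hMh.eigenvalues i := by
    intro i
    have hvm := hMh.mulVec_eigenvectorBasis i
    have hv0 : ⇑(hMh.eigenvectorBasis i) ≠ 0 := by
      intro h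
      apply hMh.eigenvectorBasis.orthonormal.ne_zero i
      ext j
      exact congrFun h j
    have hAv : A *ᵥ ⇑(hMh.eigenvectorBasis i)
        = (hMh.eigenvalues i + lam) • ⇑(hMh.eigenvectorBasis i) := by
      have h2 : M *ᵥ ⇑(hMh.eigenvectorBasis i)
          = A *ᵥ ⇑(hMh.eigenvectorBasis i) - lam • ⇑(hMh.eigenvectorBasis i) := by
        show (A - lam • (1 : Matrix V V ℝ)) *ᵥ _ = _
        rw [sub_mulVec, smul_mulVec, one_mulVec]
      rw [h2] at hvm
      funext j
      have h3 := congrFun hvm j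
      simp only [Pi.sub_apply, Pi.smul_apply, smul_eq_mul] at h3 ⊢
      linarith
    have := hMin _ ⟨_, hv0, hAv⟩
    linarith
  have hpsd : M.PosSemidef := hMh.posSemidef_iff_eigenvalues_nonneg.mpr hev
  -- the quadratic form vanishes on x
  have hquad : x ⬝ᵥ (M *ᵥ x) = 0 := by
    rw [hMdef, sub_mulVec, smul_mulVec, one_mulVec, dotProduct_sub,
      dotProduct_smul, hxAx, hxx]
    simp only [smul_eq_mul]
    linear_combination (-(α * n)) * hkey
  have hMx : M *ᵥ x = 0 := by
    apply (hpsd.dotProduct_mulVec_zero_iff x).mp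
    rwa [star_trivial]
  have hAx : A *ᵥ x = lam • x := by
    rw [hMdef, sub_mulVec, smul_mulVec, one_mulVec, sub_eq_zero] at hMx
    exact hMx
  -- x is nonzero
  obtain ⟨w, hw⟩ : ∃ w, w ∉ S := by
    by_contra h
    push_neg at h
    exact hSu (Finset.eq_univ_iff_forall.mpr h)
  have hx0 : x ≠ 0 := by
    intro h
    have := congrFun h w
    simp [hx, hχ, hw] at this
    rw [this] at hα0
    norm_num at hα0
  exact ⟨α, 1, x, hx0, hAx, fun v => by simp [hx, hχ]⟩
end

section
/- Let G be a connected d-regular graph on n vertices with normalized adjacency operator A and second largest eigenvalue λ_2. For every nonempty proper subset S ⊊ V, one has 1 − λ_2 ≤ (n·|E(S, V∖S)|)/(d·|S|·|V∖S|), where E(S, V∖S) is the set of edges with one endpoint in S and the other in V∖S. -/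
open Matrix Finset

lemma rayleigh_aux {V : Type*} [Fintype V] [DecidableEq V]
    (A : Matrix V V ℝ) (hH : A.IsHermitian) (lam2 : ℝ)
    (hSecond : ∀ μ : ℝ, (∃ f : V → ℝ, f ≠ 0 ∧ A.mulVec f = μ • f) → μ = 1 ∨ μ ≤ lam2)
    (hconst : ∀ g : V → ℝ, A.mulVec g = (1:ℝ) • g → ∀ i j, g i = g j)
    (f : V → ℝ) (hsum : ∑ v, f v = 0) :
    f ⬝ᵥ (A *ᵥ f) ≤ lam2 * (f ⬝ᵥ f) := by
  classical
  have hdot : ∀ x y : EuclideanSpace ℝ V, (inner ℝ x y : ℝ) = (x : V → ℝ) ⬝ᵥ (y : V → ℝ) := by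
    intro x y
    simp [PiLp.inner_apply, RCLike.inner_apply, dotProduct, mul_comm]
  have hsymm : Aᵀ = A := by
    ext i j
    have := congrFun (congrFun hH.eq i) j
    simpa [Matrix.conjTranspose_apply] using this
  have heig : ∀ i, A *ᵥ ((hH.eigenvectorBasis i : EuclideanSpace ℝ V) : V → ℝ)
      = hH.eigenvalues i • ((hH.eigenvectorBasis i : EuclideanSpace ℝ V) : V → ℝ) := by
    intro i; exact hH.mulVec_eigenvectorBasis i
  set F : EuclideanSpace ℝ V := WithLp.toLp 2 f with hF
  set AF : EuclideanSpace ℝ V := WithLp.toLp 2 (A *ᵥ f) with hAF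
  have h1 : ∑ i, (inner ℝ F (hH.eigenvectorBasis i) : ℝ) * inner ℝ (hH.eigenvectorBasis i) AF
      = inner ℝ F AF := hH.eigenvectorBasis.sum_inner_mul_inner F AF
  have h2 : ∑ i, (inner ℝ F (hH.eigenvectorBasis i) : ℝ) * inner ℝ (hH.eigenvectorBasis i) F
      = inner ℝ F F := hH.eigenvectorBasis.sum_inner_mul_inner F F
  have hAb : ∀ i, (inner ℝ (hH.eigenvectorBasis i) AF : ℝ)
      = hH.eigenvalues i * inner ℝ (hH.eigenvectorBasis i) F := by
    intro i
    rw [hdot, hdot]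
    have hstep : ((hH.eigenvectorBasis i : EuclideanSpace ℝ V) : V → ℝ) ⬝ᵥ (A *ᵥ f)
        = (A *ᵥ ((hH.eigenvectorBasis i : EuclideanSpace ℝ V) : V → ℝ)) ⬝ᵥ f := by
      rw [Matrix.dotProduct_mulVec, ← Matrix.mulVec_transpose, hsymm]
    calc ((hH.eigenvectorBasis i : EuclideanSpace ℝ V) : V → ℝ) ⬝ᵥ (AF : V → ℝ)
        = (A *ᵥ ((hH.eigenvectorBasis i : EuclideanSpace ℝ V) : V → ℝ)) ⬝ᵥ f := hstep
      _ = (hH.eigenvalues i • ((hH.eigenvectorBasis i : EuclideanSpace ℝ V) : V → ℝ)) ⬝ᵥ f := by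
          rw [heig i]
      _ = hH.eigenvalues i * (((hH.eigenvectorBasis i : EuclideanSpace ℝ V) : V → ℝ) ⬝ᵥ (F : V → ℝ)) := by
          rw [smul_dotProduct]; rfl
  have key : ∀ i, (inner ℝ F (hH.eigenvectorBasis i) : ℝ) * inner ℝ (hH.eigenvectorBasis i) AF
      ≤ lam2 * ((inner ℝ F (hH.eigenvectorBasis i) : ℝ) * inner ℝ F (hH.eigenvectorBasis i)) := by
    intro i
    rw [hAb i]
    have hc : (inner ℝ (hH.eigenvectorBasis i) F : ℝ) = inner ℝ F (hH.eigenvectorBasis i) :=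
      real_inner_comm _ _
    rw [hc]
    have hbne : ((hH.eigenvectorBasis i : EuclideanSpace ℝ V) : V → ℝ) ≠ 0 :=
      fun h => hH.eigenvectorBasis.orthonormal.ne_zero i (by simpa using congrArg (WithLp.toLp 2) h)
    rcases hSecond (hH.eigenvalues i) ⟨_, hbne, hH.mulVec_eigenvectorBasis i⟩ with h | h
    · have hci : (inner ℝ F (hH.eigenvectorBasis i) : ℝ) = 0 := by
        rw [hdot]
        have hc : ∀ v, ((hH.eigenvectorBasis i : EuclideanSpace ℝ V) : V → ℝ) v
            = ((hH.eigenvectorBasis i : EuclideanSpace ℝ V) : V → ℝ) i :=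
          fun v => hconst _ (by rw [heig i, h, one_smul]) v i
        calc (F : V → ℝ) ⬝ᵥ ((hH.eigenvectorBasis i : EuclideanSpace ℝ V) : V → ℝ)
            = ∑ v, f v * ((hH.eigenvectorBasis i : EuclideanSpace ℝ V) : V → ℝ) i := by
              unfold dotProduct
              exact Finset.sum_congr rfl fun v _ => by rw [hc v]
          _ = (∑ v, f v) * ((hH.eigenvectorBasis i : EuclideanSpace ℝ V) : V → ℝ) i := by
              rw [Finset.sum_mul]
          _ = 0 := by rw [hsum, zero_mul]
      rw [hci]; simp
    · nlinarith [sq_nonneg (inner ℝ F (hH.eigenvectorBasis i) : ℝ)]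
  have hle : ∑ i, (inner ℝ F (hH.eigenvectorBasis i) : ℝ) * inner ℝ (hH.eigenvectorBasis i) AF
      ≤ ∑ i, lam2 * ((inner ℝ F (hH.eigenvectorBasis i) : ℝ) * inner ℝ F (hH.eigenvectorBasis i)) :=
    Finset.sum_le_sum (fun i _ => key i)
  rw [h1] at hle
  have h2' : ∑ i, lam2 * ((inner ℝ F (hH.eigenvectorBasis i) : ℝ) * inner ℝ F (hH.eigenvectorBasis i))
      = lam2 * inner ℝ F F := by
    rw [← Finset.mul_sum]
    congr 1
    calc ∑ i, (inner ℝ F (hH.eigenvectorBasis i) : ℝ) * inner ℝ F (hH.eigenvectorBasis i)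
        = ∑ i, (inner ℝ F (hH.eigenvectorBasis i) : ℝ) * inner ℝ (hH.eigenvectorBasis i) F :=
          Finset.sum_congr rfl fun i _ => by rw [real_inner_comm F (hH.eigenvectorBasis i)]
      _ = inner ℝ F F := h2
  rw [h2'] at hle
  calc (F : V → ℝ) ⬝ᵥ (AF : V → ℝ) = inner ℝ F AF := (hdot F AF).symm
    _ ≤ lam2 * inner ℝ F F := hle
    _ = lam2 * (f ⬝ᵥ f) := by rw [hdot]


/-- **Cheeger (Alon–Milman, Tanner) bound.** For every nonempty proper subset `S` of a
connected `d`-regular graph with second largest normalized adjacency eigenvalue `lam2`,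
`1 - lam2 ≤ n·|E(S, Sᶜ)| / (d·|S|·|Sᶜ|)`. -/
theorem cheeger_bound {V : Type*} [Fintype V] [DecidableEq V]
    (G : SimpleGraph V) [DecidableRel G.Adj] (d : ℕ)
    (hreg : G.IsRegularOfDegree d) (hconn : G.Connected)
    (A : Matrix V V ℝ) (hA : A = (d : ℝ)⁻¹ • G.adjMatrix ℝ)
    (lam2 : ℝ) (hlt : lam2 < 1)
    (hEig : ∃ f : V → ℝ, f ≠ 0 ∧ A.mulVec f = lam2 • f)
    (hSecond : ∀ μ : ℝ, (∃ f : V → ℝ, f ≠ 0 ∧ A.mulVec f = μ • f) → μ = 1 ∨ μ ≤ lam2)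
    (S : Finset V) (hne : S.Nonempty) (hproper : S ≠ univ) :
    1 - lam2 ≤ ((Fintype.card V : ℝ) *
        (((S ×ˢ Sᶜ).filter fun p => G.Adj p.1 p.2).card : ℝ)) /
      ((d : ℝ) * (S.card : ℝ) * (Sᶜ.card : ℝ)) := by
  classical
  obtain ⟨s, hs⟩ := hne
  have hScne : Sᶜ.Nonempty := (Finset.compl_ne_univ_iff_nonempty Sᶜ).mp (by rwa [compl_compl])
  obtain ⟨t, ht⟩ := hScne
  have hd0 : 0 < d := by
    have hst : s ≠ t := by rintro rfl; exact (Finset.mem_compl.mp ht) hs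
    obtain ⟨w⟩ := hconn.preconnected s t
    rw [← hreg s, SimpleGraph.degree_pos_iff_exists_adj]
    cases w with
    | nil => exact absurd rfl hst
    | cons h _ => exact ⟨_, h⟩
  have hd : (0:ℝ) < d := Nat.cast_pos.mpr hd0
  set a := (S.card : ℝ) with ha
  set bb := (Sᶜ.card : ℝ) with hbb
  set n := (Fintype.card V : ℝ) with hn
  set e := (((S ×ˢ Sᶜ).filter fun p => G.Adj p.1 p.2).card : ℝ) with he
  have hapos : 0 < a := by
    rw [ha]; exact_mod_cast Finset.card_pos.mpr ⟨s, hs⟩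
  have hbpos : 0 < bb := by
    rw [hbb]; exact_mod_cast Finset.card_pos.mpr ⟨t, ht⟩
  have hnab : a + bb = n := by
    rw [ha, hbb, hn]; exact_mod_cast S.card_add_card_compl
  have hnpos : 0 < n := by linarith
  -- A is Hermitian
  have hH : A.IsHermitian := by
    rw [hA]
    show ((d : ℝ)⁻¹ • G.adjMatrix ℝ)ᴴ = _
    ext i j
    simp [Matrix.conjTranspose_apply, SimpleGraph.adj_comm]
  -- eigenvectors with eigenvalue 1 are constant
  have hconst : ∀ g : V → ℝ, A.mulVec g = (1:ℝ) • g → ∀ i j, g i = g j := by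
    intro g hg i j
    have hadj : (G.adjMatrix ℝ) *ᵥ g = (d:ℝ) • g := by
      rw [hA, Matrix.smul_mulVec, one_smul] at hg
      have h2 := congrArg (fun x : V → ℝ => (d:ℝ) • x) hg
      simpa [smul_smul, mul_inv_cancel₀ hd.ne'] using h2
    have hlap : Matrix.toLin' (G.lapMatrix ℝ) g = 0 := by
      rw [Matrix.toLin'_apply]
      ext v
      simp only [SimpleGraph.lapMatrix, Matrix.sub_mulVec, Pi.sub_apply,
        SimpleGraph.degMatrix_mulVec_apply, hreg v, hadj, Pi.smul_apply, smul_eq_mul,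
        Pi.zero_apply]
      ring
    exact (SimpleGraph.lapMatrix_mulVec_eq_zero_iff_forall_reachable (G := G)).mp
      (by rwa [Matrix.toLin'_apply] at hlap) i j
      (hconn i j)
  -- the test function
  set ff : V → ℝ := fun v => if v ∈ S then bb else -a with hff
  have hfS : ∀ u ∈ S, ff u = bb := fun u hu => if_pos hu
  have hfC : ∀ u ∈ Sᶜ, ff u = -a := fun u hu => if_neg (Finset.mem_compl.mp hu)
  have hsum : ∑ v, ff v = 0 := by
    calc ∑ v, ff v = ∑ v ∈ S, ff v + ∑ v ∈ Sᶜ, ff v := (Finset.sum_add_sum_compl S ff).symm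
      _ = ∑ _v ∈ S, bb + ∑ _v ∈ Sᶜ, (-a) := by
          rw [Finset.sum_congr rfl hfS, Finset.sum_congr rfl hfC]
      _ = S.card • bb + Sᶜ.card • (-a) := by rw [Finset.sum_const, Finset.sum_const]
      _ = 0 := by rw [nsmul_eq_mul, nsmul_eq_mul, ← ha, ← hbb]; ring
  have hfS2 : ∀ u ∈ S, ff u * ff u = bb * bb := fun u hu => by rw [hfS u hu]
  have hfC2 : ∀ u ∈ Sᶜ, ff u * ff u = (-a) * (-a) := fun u hu => by rw [hfC u hu]
  have hPP : ff ⬝ᵥ ff = a * bb * n := by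
    show ∑ v, ff v * ff v = _
    calc ∑ v, ff v * ff v
        = ∑ v ∈ S, (ff v * ff v) + ∑ v ∈ Sᶜ, (ff v * ff v) :=
          (Finset.sum_add_sum_compl S _).symm
      _ = ∑ _v ∈ S, bb * bb + ∑ _v ∈ Sᶜ, (-a) * (-a) := by
          rw [Finset.sum_congr rfl hfS2, Finset.sum_congr rfl hfC2]
      _ = S.card • (bb * bb) + Sᶜ.card • ((-a) * (-a)) := by
          rw [Finset.sum_const, Finset.sum_const]
      _ = a * bb * n := by rw [nsmul_eq_mul, nsmul_eq_mul, ← ha, ← hbb, ← hnab]; ring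
  -- counting lemma
  have cnt : ∀ P Q : Finset V, ∑ u ∈ P, ∑ v ∈ Q, (if G.Adj u v then (1:ℝ) else 0)
      = (((P ×ˢ Q).filter fun p => G.Adj p.1 p.2).card : ℝ) := by
    intro P Q
    rw [← Finset.sum_product', Finset.sum_boole]
  have hrow : ∀ P : Finset V, ∑ u ∈ P, ∑ v, (if G.Adj u v then (1:ℝ) else 0)
      = (d:ℝ) * P.card := by
    intro P
    have h1 : ∀ u, ∑ v, (if G.Adj u v then (1:ℝ) else 0) = (d:ℝ) := by
      intro u
      rw [Finset.sum_boole]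
      norm_cast
      rw [← SimpleGraph.neighborFinset_eq_filter]
      exact hreg u
    rw [Finset.sum_congr rfl fun u _ => h1 u, Finset.sum_const, nsmul_eq_mul, mul_comm]
  have hswap : (((Sᶜ ×ˢ S).filter fun p => G.Adj p.1 p.2).card : ℝ) = e := by
    rw [he]
    norm_cast
    apply Finset.card_bij' (fun p _ => Prod.swap p) (fun p _ => Prod.swap p)
    · intro p hp
      simp only [Finset.mem_filter, Finset.mem_product] at hp ⊢
      exact ⟨⟨hp.1.2, hp.1.1⟩, hp.2.symm⟩
    · intro p hp
      simp only [Finset.mem_filter, Finset.mem_product] at hp ⊢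
      exact ⟨⟨hp.1.2, hp.1.1⟩, hp.2.symm⟩
    · intro p _; rfl
    · intro p _; rfl
  -- block sums
  have block : ∀ (P Q : Finset V) (cP cQ : ℝ), (∀ u ∈ P, ff u = cP) → (∀ v ∈ Q, ff v = cQ) →
      ∑ u ∈ P, ∑ v ∈ Q, (if G.Adj u v then ff u * ff v else 0)
      = cP * cQ * (((P ×ˢ Q).filter fun p => G.Adj p.1 p.2).card : ℝ) := by
    intro P Q cP cQ hP hQ
    calc ∑ u ∈ P, ∑ v ∈ Q, (if G.Adj u v then ff u * ff v else 0)
        = ∑ u ∈ P, ∑ v ∈ Q, cP * cQ * (if G.Adj u v then (1:ℝ) else 0) := by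
          refine Finset.sum_congr rfl fun u hu => Finset.sum_congr rfl fun v hv => ?_
          by_cases h : G.Adj u v <;> simp [h, hP u hu, hQ v hv]
      _ = cP * cQ * ∑ u ∈ P, ∑ v ∈ Q, (if G.Adj u v then (1:ℝ) else 0) := by
          simp_rw [← Finset.mul_sum]
      _ = _ := by rw [cnt]
  set ess := (((S ×ˢ S).filter fun p => G.Adj p.1 p.2).card : ℝ) with hess
  set ecc := (((Sᶜ ×ˢ Sᶜ).filter fun p => G.Adj p.1 p.2).card : ℝ) with hecc
  have hS1 : ess + e = (d:ℝ) * a := by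
    calc ess + e
        = (∑ u ∈ S, ∑ v ∈ S, (if G.Adj u v then (1:ℝ) else 0))
          + ∑ u ∈ S, ∑ v ∈ Sᶜ, (if G.Adj u v then (1:ℝ) else 0) := by rw [cnt, cnt]
      _ = ∑ u ∈ S, ((∑ v ∈ S, (if G.Adj u v then (1:ℝ) else 0))
          + ∑ v ∈ Sᶜ, (if G.Adj u v then (1:ℝ) else 0)) := by rw [Finset.sum_add_distrib]
      _ = ∑ u ∈ S, ∑ v, (if G.Adj u v then (1:ℝ) else 0) :=
          Finset.sum_congr rfl fun u _ => Finset.sum_add_sum_compl S _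
      _ = (d:ℝ) * a := hrow S
  have hC1 : ecc + e = (d:ℝ) * bb := by
    calc ecc + e
        = (∑ u ∈ Sᶜ, ∑ v ∈ Sᶜ, (if G.Adj u v then (1:ℝ) else 0))
          + ∑ u ∈ Sᶜ, ∑ v ∈ S, (if G.Adj u v then (1:ℝ) else 0) := by rw [cnt, cnt, hswap]
      _ = ∑ u ∈ Sᶜ, ((∑ v ∈ Sᶜ, (if G.Adj u v then (1:ℝ) else 0))
          + ∑ v ∈ S, (if G.Adj u v then (1:ℝ) else 0)) := by rw [Finset.sum_add_distrib]
      _ = ∑ u ∈ Sᶜ, ∑ v, (if G.Adj u v then (1:ℝ) else 0) := by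
          refine Finset.sum_congr rfl fun u _ => ?_
          rw [add_comm, Finset.sum_add_sum_compl S]
      _ = (d:ℝ) * bb := hrow Sᶜ
  -- the quadratic form of the adjacency matrix
  have hXval : ff ⬝ᵥ ((G.adjMatrix ℝ) *ᵥ ff) = (d:ℝ) * (a * bb * n) - n ^ 2 * e := by
    have hXexp : ff ⬝ᵥ ((G.adjMatrix ℝ) *ᵥ ff)
        = ∑ u, ∑ v, (if G.Adj u v then ff u * ff v else 0) := by
      simp only [dotProduct, SimpleGraph.adjMatrix_mulVec_apply,
        SimpleGraph.neighborFinset_eq_filter, Finset.sum_filter, Finset.mul_sum, mul_ite,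
        mul_zero]
    rw [hXexp, ← Finset.sum_add_sum_compl S]
    have hin : ∀ T : Finset V, ∑ u ∈ T, ∑ v, (if G.Adj u v then ff u * ff v else 0)
        = ∑ u ∈ T, ∑ v ∈ S, (if G.Adj u v then ff u * ff v else 0)
          + ∑ u ∈ T, ∑ v ∈ Sᶜ, (if G.Adj u v then ff u * ff v else 0) := by
      intro T
      rw [← Finset.sum_add_distrib]
      exact Finset.sum_congr rfl fun u _ => (Finset.sum_add_sum_compl S _).symm
    rw [hin S, hin Sᶜ, block S S bb bb hfS hfS, block S Sᶜ bb (-a) hfS hfC,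
      block Sᶜ S (-a) bb hfC hfS, block Sᶜ Sᶜ (-a) (-a) hfC hfC, hswap, ← hess, ← hecc, ← he]
    have h1 : ess = (d:ℝ) * a - e := by linarith
    have h2 : ecc = (d:ℝ) * bb - e := by linarith
    rw [h1, h2, ← hnab]
    ring
  -- apply the Rayleigh bound
  have hray := rayleigh_aux A hH lam2 hSecond hconst ff hsum
  have hAf : ff ⬝ᵥ (A *ᵥ ff) = (d:ℝ)⁻¹ * ((d:ℝ) * (a * bb * n) - n ^ 2 * e) := by
    rw [hA, Matrix.smul_mulVec, dotProduct_smul, hXval, smul_eq_mul]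
  rw [hAf, hPP] at hray
  have h4 : (d:ℝ) * (a * bb * n) - n ^ 2 * e ≤ (d:ℝ) * (lam2 * (a * bb * n)) := by
    have h5 := mul_le_mul_of_nonneg_left hray hd.le
    rwa [← mul_assoc, mul_inv_cancel₀ hd.ne', one_mul] at h5
  rw [le_div_iff₀ (by positivity)]
  have h5 : (1 - lam2) * ((d:ℝ) * a * bb) * n ≤ n * e * n := by nlinarith [h4]
  exact le_of_mul_le_mul_right h5 hnpos
end

section
/- Let G be a connected d-regular graph on n vertices with second largest normalized adjacency eigenvalue λ_2. If S ⊊ V is a nonempty proper subset satisfying n·|E(S, V∖S)|/(d·|S|·|V∖S|) = 1 − λ_2, then the characteristic function 1_S is a linear combination of the constant function and a single eigenfunction of the normalized adjacency operator with eigenvalue λ_2. -/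
open Matrix Finset

lemma aux_eig {V : Type*} [Fintype V] [DecidableEq V] [Nonempty V]
    (A : Matrix V V ℝ) (hH : A.IsHermitian) (lam2 : ℝ)
    (hSecond : ∀ μ : ℝ, (∃ f : V → ℝ, f ≠ 0 ∧ A.mulVec f = μ • f) → μ = 1 ∨ μ ≤ lam2)
    (hone : ∀ g : V → ℝ, A.mulVec g = g → ∀ v w, g v = g w)
    (f : V → ℝ) (horth : ∑ v, f v = 0)
    (hray : ∑ u, f u * (A.mulVec f) u = lam2 * ∑ v, f v * f v) :
    A.mulVec f = lam2 • f := by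
  classical
  obtain ⟨v0⟩ := (inferInstance : Nonempty V)
  let b := hH.eigenvectorBasis
  let μ : V → ℝ := hH.eigenvalues
  let f' : EuclideanSpace ℝ V := WithLp.toLp 2 f
  let c : V → ℝ := fun i => ∑ v, b i v * f v
  have hbdef : ∀ i, A *ᵥ ⇑(b i) = μ i • ⇑(b i) := fun i => hH.mulVec_eigenvectorBasis i
  have hinner : ∀ x y : EuclideanSpace ℝ V, inner ℝ x y = ∑ v, x v * y v := by
    intro x y; simp [PiLp.inner_apply, mul_comm]
  -- eigenvalue bound
  have hμ : ∀ i, μ i = 1 ∨ μ i ≤ lam2 := by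
    intro i
    refine hSecond (μ i) ⟨⇑(b i), ?_, hbdef i⟩
    intro h0
    exact b.orthonormal.ne_zero i (by ext v; exact congrFun h0 v)
  -- eigenvectors with eigenvalue 1 are constant, hence orthogonal to f
  have hc1 : ∀ i, μ i = 1 → c i = 0 := by
    intro i hi
    have heq : A.mulVec ⇑(b i) = ⇑(b i) := by
      have h := hbdef i; rwa [hi, one_smul] at h
    have hconst := hone _ heq
    have h1 : c i = ∑ v, b i v0 * f v :=
      Finset.sum_congr rfl fun v _ => congrArg (fun t => t * f v) (hconst v v0)
    rw [h1, ← Finset.mul_sum, horth, mul_zero]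
  -- coefficient computation for A *ᵥ f
  have hAf : ∀ i, ∑ v, b i v * (A.mulVec f) v = μ i * c i := by
    intro i
    have h1 : ∑ v, b i v * (A.mulVec f) v = (⇑(b i)) ⬝ᵥ (A *ᵥ f) := rfl
    have hsymm : Aᵀ = A := by
      have h := hH; rwa [Matrix.IsHermitian, Matrix.conjTranspose_eq_transpose_of_trivial] at h
    rw [h1, Matrix.dotProduct_mulVec, ← Matrix.mulVec_transpose, hsymm, hbdef i,
      smul_dotProduct]
    rfl
  -- Parseval
  have e1 : ∀ i, inner ℝ f' (b i) = c i := fun i => by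
    rw [real_inner_comm]; exact hinner _ _
  have e2 : ∀ i, inner ℝ (b i) f' = c i := fun i => hinner _ _
  have S1 : ∑ i, c i * c i = ∑ v, f v * f v := by
    have h := b.sum_inner_mul_inner f' f'
    calc ∑ i, c i * c i = ∑ i, inner ℝ f' (b i) * inner ℝ (b i) f' :=
          Finset.sum_congr rfl fun i _ => by rw [e1, e2]
      _ = inner ℝ f' f' := h
      _ = ∑ v, f v * f v := hinner f' f'
  let g' : EuclideanSpace ℝ V := WithLp.toLp 2 (A.mulVec f)
  have e3 : ∀ i, inner ℝ (b i) g' = μ i * c i := fun i => by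
    rw [hinner]; exact hAf i
  have S2 : ∑ i, μ i * (c i * c i) = ∑ u, f u * (A.mulVec f) u := by
    have h := b.sum_inner_mul_inner f' g'
    calc ∑ i, μ i * (c i * c i) = ∑ i, inner ℝ f' (b i) * inner ℝ (b i) g' :=
          Finset.sum_congr rfl fun i _ => by rw [e1, e3]; ring
      _ = inner ℝ f' g' := h
      _ = ∑ u, f u * (A.mulVec f) u := hinner f' g'
  -- zero sum of nonneg terms
  have hzero : ∑ i, (lam2 - μ i) * (c i * c i) = 0 := by
    have h : ∑ i, (lam2 - μ i) * (c i * c i)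
        = lam2 * ∑ i, c i * c i - ∑ i, μ i * (c i * c i) := by
      rw [Finset.mul_sum, ← Finset.sum_sub_distrib]
      exact Finset.sum_congr rfl fun i _ => by ring
    rw [h, S1, S2, hray]; ring
  have hterm : ∀ i ∈ Finset.univ, (0:ℝ) ≤ (lam2 - μ i) * (c i * c i) := by
    intro i _
    rcases hμ i with h1 | h2
    · rw [hc1 i h1]; simp
    · exact mul_nonneg (by linarith) (mul_self_nonneg _)
  have hall := (Finset.sum_eq_zero_iff_of_nonneg hterm).1 hzero
  have hev : ∀ i, μ i * c i = lam2 * c i := by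
    intro i
    have h := hall i (Finset.mem_univ i)
    rcases mul_eq_zero.1 h with h | h
    · have : μ i = lam2 := by linarith
      rw [this]
    · have hc0 : c i = 0 := by
        rcases mul_eq_zero.1 h with h' | h' <;> exact h'
      rw [hc0, mul_zero, mul_zero]
  -- the defect vector g has all coefficients zero
  let g : V → ℝ := A.mulVec f - lam2 • f
  let gE : EuclideanSpace ℝ V := WithLp.toLp 2 g
  have hgcoef : ∀ i, inner ℝ (b i) gE = 0 := by
    intro i
    rw [hinner]
    have h1 : ∀ v, g v = (A.mulVec f) v - lam2 * f v := fun v => rfl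
    calc ∑ v, b i v * g v
        = ∑ v, (b i v * (A.mulVec f) v - lam2 * (b i v * f v)) := by
          refine Finset.sum_congr rfl fun v _ => ?_; rw [h1]; ring
      _ = ∑ v, b i v * (A.mulVec f) v - lam2 * ∑ v, b i v * f v := by
          rw [Finset.sum_sub_distrib, Finset.mul_sum]
      _ = μ i * c i - lam2 * c i := by rw [hAf i]
      _ = 0 := by rw [hev i]; ring
  have hgg : inner ℝ gE gE = 0 := by
    have h := b.sum_inner_mul_inner gE gE
    rw [← h]
    exact Finset.sum_eq_zero fun i _ => by rw [hgcoef i, mul_zero]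
  have hg0 : ∀ v, g v = 0 := by
    have h : ∑ v, g v * g v = 0 := (hinner gE gE).symm.trans hgg
    intro v
    have := (Finset.sum_eq_zero_iff_of_nonneg
      (fun v _ => mul_self_nonneg (g v))).1 h v (Finset.mem_univ v)
    exact mul_self_eq_zero.1 this
  funext v
  have := hg0 v
  have h1 : g v = (A.mulVec f) v - lam2 * f v := rfl
  rw [h1] at this
  have : (A.mulVec f) v = lam2 * f v := by linarith
  simpa using this


/-- If a nonempty proper subset `S` attains the Cheeger bound, then `1_S` is a linear
combination of the constant function and a single eigenfunction with eigenvalue `lam2`. -/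
theorem cheeger_sharp_extremal_design {V : Type*} [Fintype V] [DecidableEq V]
    (G : SimpleGraph V) [DecidableRel G.Adj] (d : ℕ)
    (hreg : G.IsRegularOfDegree d) (hconn : G.Connected)
    (A : Matrix V V ℝ) (hA : A = (d : ℝ)⁻¹ • G.adjMatrix ℝ)
    (lam2 : ℝ) (hlt : lam2 < 1)
    (hEig : ∃ f : V → ℝ, f ≠ 0 ∧ A.mulVec f = lam2 • f)
    (hSecond : ∀ μ : ℝ, (∃ f : V → ℝ, f ≠ 0 ∧ A.mulVec f = μ • f) → μ = 1 ∨ μ ≤ lam2)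
    (S : Finset V) (hne : S.Nonempty) (hproper : S ≠ univ)
    (hSharp : ((Fintype.card V : ℝ) *
        (((S ×ˢ Sᶜ).filter fun p => G.Adj p.1 p.2).card : ℝ)) /
        ((d : ℝ) * (S.card : ℝ) * (Sᶜ.card : ℝ)) = 1 - lam2) :
    ∃ (c₁ c₂ : ℝ) (f : V → ℝ), f ≠ 0 ∧ A.mulVec f = lam2 • f ∧
      ∀ v, (if v ∈ S then (1 : ℝ) else 0) = c₁ + c₂ * f v := by
    classical
  haveI hVne : Nonempty V := ⟨hne.choose⟩
  -- notation
  set nR : ℝ := (Fintype.card V : ℝ) with hnR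
  set s : ℝ := (S.card : ℝ) with hs
  set e : ℝ := (((S ×ˢ Sᶜ).filter fun p => G.Adj p.1 p.2).card : ℝ) with he
  -- basic positivity
  have hn0 : 0 < nR := by
    simp only [hnR]; exact_mod_cast Fintype.card_pos
  have hs0 : 0 < s := by simp only [hs]; exact_mod_cast hne.card_pos
  have hslt : S.card < Fintype.card V := by
    have h := Finset.card_lt_card (Finset.ssubset_univ_iff.2 hproper)
    simpa using h
  have hsn : s < nR := by simp only [hs, hnR]; exact_mod_cast hslt
  have hcompl : ((Sᶜ.card : ℕ) : ℝ) = nR - s := by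
    rw [Finset.card_compl, Nat.cast_sub (Finset.card_le_univ S)]
  have hd0 : d ≠ 0 := by
    rintro rfl
    obtain ⟨u, hu⟩ := hne
    obtain ⟨w, hw⟩ : ∃ w, w ∉ S := by
      by_contra h; push_neg at h; exact hproper (Finset.eq_univ_iff_forall.2 h)
    obtain ⟨p⟩ := hconn u w
    cases p with
    | nil => exact hw hu
    | cons h q =>
      have := (G.degree_pos_iff_exists_adj u).2 ⟨_, h⟩
      rw [hreg u] at this
      exact lt_irrefl 0 this
  have hdR : (0:ℝ) < (d:ℝ) := by exact_mod_cast Nat.pos_of_ne_zero hd0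
  have hdne : (d:ℝ) ≠ 0 := ne_of_gt hdR
  -- A is Hermitian
  have hH : A.IsHermitian := by
    rw [hA, Matrix.IsHermitian, Matrix.conjTranspose_eq_transpose_of_trivial,
      Matrix.transpose_smul, (SimpleGraph.isSymm_adjMatrix G)]
  -- eigenvectors of eigenvalue 1 are constant
  have hone : ∀ g : V → ℝ, A.mulVec g = g → ∀ v w, g v = g w := by
    intro g hg v w
    rw [hA, Matrix.smul_mulVec] at hg
    have hadj : G.adjMatrix ℝ *ᵥ g = (d:ℝ) • g := by
      calc G.adjMatrix ℝ *ᵥ g = (d:ℝ) • ((d:ℝ)⁻¹ • (G.adjMatrix ℝ *ᵥ g)) := by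
            rw [smul_smul, mul_inv_cancel₀ hdne, one_smul]
        _ = (d:ℝ) • g := by rw [hg]
    have hlap : G.lapMatrix ℝ *ᵥ g = 0 := by
      funext u
      have h1 := congrFun hadj u
      simp only [Pi.smul_apply, smul_eq_mul] at h1
      simp only [SimpleGraph.lapMatrix, Matrix.sub_mulVec, Pi.sub_apply,
        SimpleGraph.degMatrix_mulVec_apply, hreg u, h1, Pi.zero_apply]
      ring
    have h2 := (G.lapMatrix_mulVec_eq_zero_iff_forall_reachable (x := g)).1 hlap
    exact h2 v w (hconn v w)
  -- sharp condition, cleared of denominators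
  have hkey : nR * e = (1 - lam2) * ((d:ℝ) * s * (nR - s)) := by
    rw [hcompl] at hSharp
    have hpos : (0:ℝ) < (d:ℝ) * s * (nR - s) := mul_pos (mul_pos hdR hs0) (by linarith)
    rw [div_eq_iff (ne_of_gt hpos)] at hSharp
    linarith [hSharp]
  -- indicator and test function
  set x : V → ℝ := fun v => if v ∈ S then 1 else 0 with hx
  set c0 : ℝ := s / nR with hc0
  set F : V → ℝ := fun v => x v - c0 with hF
  -- row and column sums of adjacency matrix
  have hrow : ∀ u, ∑ w, (G.adjMatrix ℝ) u w = (d:ℝ) := by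
    intro u
    have h := hreg u
    rw [SimpleGraph.degree, SimpleGraph.neighborFinset_eq_filter] at h
    simp [SimpleGraph.adjMatrix_apply, Finset.sum_boole, h]
  have hcol : ∀ w, ∑ u, (G.adjMatrix ℝ) u w = (d:ℝ) := by
    intro w
    have h : ∀ u, (G.adjMatrix ℝ) u w = (G.adjMatrix ℝ) w u := by
      intro u; simp [SimpleGraph.adjMatrix_apply, G.adj_comm]
    rw [Finset.sum_congr rfl fun u _ => h u]
    exact hrow w
  -- indicator sums
  have hsumx : ∑ v, x v = s := by
    simp [hx, Finset.sum_boole, Finset.filter_mem_eq_inter, hs]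
  have hmulx : ∀ g : V → ℝ, ∑ v, x v * g v = ∑ v ∈ S, g v := by
    intro g; simp [hx, ite_mul, Finset.sum_ite_mem]
  have hmulx' : ∀ g : V → ℝ, ∑ v, g v * x v = ∑ v ∈ S, g v := by
    intro g; simp [hx, mul_ite, Finset.sum_ite_mem]
  -- e as a double sum
  have hedouble : e = ∑ u ∈ S, ∑ w ∈ Sᶜ, (G.adjMatrix ℝ) u w := by
    rw [he, Finset.card_filter]
    push_cast
    rw [Finset.sum_product]
    simp [SimpleGraph.adjMatrix_apply]
  -- inner-S double sum
  have hP : ∑ u ∈ S, ∑ w ∈ S, (G.adjMatrix ℝ) u w = (d:ℝ) * s - e := by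
    have h1 : ∀ u, ∑ w ∈ S, (G.adjMatrix ℝ) u w
        = (d:ℝ) - ∑ w ∈ Sᶜ, (G.adjMatrix ℝ) u w := by
      intro u
      have := Finset.sum_add_sum_compl S (fun w => (G.adjMatrix ℝ) u w)
      rw [hrow u] at this
      linarith
    rw [Finset.sum_congr rfl fun u _ => h1 u, Finset.sum_sub_distrib,
      Finset.sum_const, ← hedouble]
    simp [hs, mul_comm]
  -- the four double-sum values
  have T_xx : ∑ u, ∑ w, x u * (G.adjMatrix ℝ) u w * x w = (d:ℝ) * s - e := by
    rw [← hP]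
    calc ∑ u, ∑ w, x u * (G.adjMatrix ℝ) u w * x w
        = ∑ u, x u * (∑ w, (G.adjMatrix ℝ) u w * x w) := by
          refine Finset.sum_congr rfl fun u _ => ?_
          rw [Finset.mul_sum]
          exact Finset.sum_congr rfl fun w _ => by ring
      _ = ∑ u, x u * (∑ w ∈ S, (G.adjMatrix ℝ) u w) := by
          refine Finset.sum_congr rfl fun u _ => ?_
          rw [hmulx' (fun w => (G.adjMatrix ℝ) u w)]
      _ = ∑ u ∈ S, ∑ w ∈ S, (G.adjMatrix ℝ) u w := hmulx _
  have T_x2 : ∑ u, ∑ w, (G.adjMatrix ℝ) u w * x w = (d:ℝ) * s := by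
    rw [Finset.sum_comm]
    calc ∑ w, ∑ u, (G.adjMatrix ℝ) u w * x w
        = ∑ w, (d:ℝ) * x w := by
          refine Finset.sum_congr rfl fun w _ => ?_
          rw [← Finset.sum_mul, hcol w]
      _ = (d:ℝ) * s := by rw [← Finset.mul_sum, hsumx]
  have T_x1 : ∑ u, ∑ w, x u * (G.adjMatrix ℝ) u w = (d:ℝ) * s := by
    calc ∑ u, ∑ w, x u * (G.adjMatrix ℝ) u w
        = ∑ u, x u * (d:ℝ) := by
          refine Finset.sum_congr rfl fun u _ => ?_
          rw [← Finset.mul_sum, hrow u]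
      _ = (d:ℝ) * s := by rw [← Finset.sum_mul, hsumx]; ring
  have T_a : ∑ u : V, ∑ w : V, (G.adjMatrix ℝ) u w = (d:ℝ) * nR := by
    rw [Finset.sum_congr rfl fun u _ => hrow u]
    simp [hnR, mul_comm]
  -- expansion of the quadratic form
  have hexp : ∑ u, ∑ w, F u * ((G.adjMatrix ℝ) u w * F w)
      = ((d:ℝ) * s - e) - c0 * ((d:ℝ) * s) - c0 * ((d:ℝ) * s) + c0^2 * ((d:ℝ) * nR) := by
    have h1 : ∀ u w, F u * ((G.adjMatrix ℝ) u w * F w)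
        = x u * (G.adjMatrix ℝ) u w * x w - c0 * ((G.adjMatrix ℝ) u w * x w)
          - c0 * (x u * (G.adjMatrix ℝ) u w) + c0^2 * (G.adjMatrix ℝ) u w := by
      intro u w; simp only [hF]; ring
    calc ∑ u, ∑ w, F u * ((G.adjMatrix ℝ) u w * F w)
        = ∑ u, ∑ w, (x u * (G.adjMatrix ℝ) u w * x w - c0 * ((G.adjMatrix ℝ) u w * x w)
          - c0 * (x u * (G.adjMatrix ℝ) u w) + c0^2 * (G.adjMatrix ℝ) u w) :=
          Finset.sum_congr rfl fun u _ => Finset.sum_congr rfl fun w _ => h1 u w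
      _ = (∑ u, ∑ w, x u * (G.adjMatrix ℝ) u w * x w)
          - c0 * (∑ u, ∑ w, (G.adjMatrix ℝ) u w * x w)
          - c0 * (∑ u, ∑ w, x u * (G.adjMatrix ℝ) u w)
          + c0^2 * (∑ u, ∑ w, (G.adjMatrix ℝ) u w) := by
          simp only [Finset.sum_add_distrib, Finset.sum_sub_distrib, Finset.mul_sum]
      _ = _ := by rw [T_xx, T_x2, T_x1, T_a]
  -- norm of F
  have hFsq : ∑ v, F v * F v = s - 2 * c0 * s + c0^2 * nR := by
    have h1 : ∀ v, F v * F v = x v * x v - 2 * c0 * x v + c0^2 := by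
      intro v; simp only [hF]; ring
    have h2 : ∑ v, x v * x v = s := by
      rw [← hsumx]
      refine Finset.sum_congr rfl fun v _ => ?_
      by_cases hv : v ∈ S <;> simp [hx, hv]
    calc ∑ v, F v * F v = ∑ v, (x v * x v - 2 * c0 * x v + c0^2) :=
          Finset.sum_congr rfl fun v _ => h1 v
      _ = (∑ v, x v * x v) - 2 * c0 * (∑ v, x v) + (Fintype.card V : ℝ) * c0^2 := by
          simp only [Finset.sum_add_distrib, Finset.sum_sub_distrib, Finset.mul_sum,
            Finset.sum_const, Finset.card_univ, nsmul_eq_mul]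
      _ = s - 2 * c0 * s + c0^2 * nR := by rw [h2, hsumx, hnR]; ring
  -- orthogonality
  have horth : ∑ v, F v = 0 := by
    have : ∑ v, F v = (∑ v, x v) - (Fintype.card V : ℝ) * c0 := by
      simp only [hF, Finset.sum_sub_distrib, Finset.sum_const, Finset.card_univ, nsmul_eq_mul]
    rw [this, hsumx, ← hnR, hc0]
    field_simp
    ring
  -- the Rayleigh identity
  have hAF : ∀ u, (A.mulVec F) u = (d:ℝ)⁻¹ * ∑ w, (G.adjMatrix ℝ) u w * F w := by
    intro u
    rw [hA, Matrix.smul_mulVec]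
    simp [Matrix.mulVec, dotProduct]
  have hray : ∑ u, F u * (A.mulVec F) u = lam2 * ∑ v, F v * F v := by
    have hL : ∑ u, F u * (A.mulVec F) u
        = (d:ℝ)⁻¹ * ∑ u, ∑ w, F u * ((G.adjMatrix ℝ) u w * F w) := by
      rw [Finset.mul_sum]
      refine Finset.sum_congr rfl fun u _ => ?_
      calc F u * (A.mulVec F) u
          = (d:ℝ)⁻¹ * (F u * ∑ w, (G.adjMatrix ℝ) u w * F w) := by rw [hAF u]; ring
        _ = (d:ℝ)⁻¹ * ∑ w, F u * ((G.adjMatrix ℝ) u w * F w) :=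
            congrArg (fun t => (d:ℝ)⁻¹ * t) (Finset.mul_sum _ _ _)
    have hEe : e = (1 - lam2) * ((d:ℝ) * s * (nR - s)) / nR := by
      rw [eq_div_iff (ne_of_gt hn0)]
      linarith [hkey]
    rw [hL, hexp, hFsq, hEe, hc0]
    field_simp
    ring
  -- F is nonzero
  have hFne : F ≠ 0 := by
    intro h0
    obtain ⟨u, hu⟩ := hne
    have h1 : F u = 0 := congrFun h0 u
    simp only [hF, hx, hu, if_true, hc0] at h1
    have : s = nR := by
      field_simp at h1
      linarith
    linarith
  -- apply the spectral lemma
  have hf := aux_eig A hH lam2 hSecond hone F horth hray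
  refine ⟨c0, 1, F, hFne, hf, fun v => ?_⟩
  by_cases hv : v ∈ S <;> simp [hF, hx, hv]
end

section
/- Let I ⊊ [n] be a nonempty proper subset and set S_I = {J ⊆ [n] : |I ∩ J| is odd}. Then the indicator function 1_{S_I} equals (1/2)(1_V − χ_I), where χ_I(J) = (−1)^{|I∩J|} is an eigenfunction of the normalized adjacency operator of the hypercube Q_n with eigenvalue 1 − 2|I|/n. In particular S_I is a graphical design of order 1 (an extremal graphical design). -/
open Matrix Finset

def hypercube (n : ℕ) : SimpleGraph (Finset (Fin n)) where
  Adj J K := (symmDiff J K).card = 1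
  symm := by
    constructor
    intro J K h
    rwa [symmDiff_comm]
  loopless := by
    constructor
    intro J h
    rw [symmDiff_self] at h
    simp at h

instance hypercube.instDecidableRelAdj (n : ℕ) : DecidableRel (hypercube n).Adj :=
  fun J K => inferInstanceAs (Decidable ((symmDiff J K).card = 1))

/-- The Walsh character `χ_I(J) = (-1)^{|I ∩ J|}`. -/
def walshChar {n : ℕ} (I : Finset (Fin n)) : Finset (Fin n) → ℝ :=
  fun J => (-1 : ℝ) ^ (I ∩ J).card

lemma card_symmDiff_singleton {n : ℕ} (s : Finset (Fin n)) (i : Fin n) :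
    (-1 : ℝ) ^ (symmDiff s {i}).card = -(-1 : ℝ) ^ s.card := by
  by_cases hi : i ∈ s
  · have h : symmDiff s {i} = s.erase i := by
      ext x
      simp only [symmDiff_def, Finset.sup_eq_union, Finset.mem_union, Finset.mem_sdiff,
        Finset.mem_singleton, Finset.mem_erase]
      constructor
      · rintro (⟨hx, hne⟩ | ⟨hx, hns⟩)
        · exact ⟨hne, hx⟩
        · exact absurd (hx ▸ hi) hns
      · rintro ⟨hne, hx⟩; exact Or.inl ⟨hx, hne⟩
    rw [h, Finset.card_erase_of_mem hi]
    have hpos : 1 ≤ s.card := Finset.card_pos.mpr ⟨i, hi⟩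
    have : s.card = (s.card - 1) + 1 := by omega
    rw [this, pow_succ]
    ring_nf
    simp
  · have h : symmDiff s {i} = insert i s := by
      ext x
      simp only [symmDiff_def, Finset.sup_eq_union, Finset.mem_union, Finset.mem_sdiff,
        Finset.mem_singleton, Finset.mem_insert]
      constructor
      · rintro (⟨hx, _⟩ | ⟨hx, _⟩)
        · exact Or.inr hx
        · exact Or.inl hx
      · rintro (rfl | hx)
        · exact Or.inr ⟨rfl, hi⟩
        · exact Or.inl ⟨hx, fun he => hi (he ▸ hx)⟩
    rw [h, Finset.card_insert_of_notMem hi, pow_succ]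
    ring

lemma walsh_flip {n : ℕ} (I J : Finset (Fin n)) (i : Fin n) :
    walshChar I (symmDiff J {i}) = (if i ∈ I then -1 else 1) * walshChar I J := by
  unfold walshChar
  rw [← Finset.inf_eq_inter, inf_symmDiff_distrib_left]
  by_cases hi : i ∈ I
  · have h1 : I ⊓ ({i} : Finset (Fin n)) = {i} := by
      simp [Finset.inf_eq_inter, Finset.inter_eq_right.mpr, Finset.singleton_subset_iff.mpr hi]
    rw [h1]
    have := card_symmDiff_singleton (I ⊓ J) i
    simp only [Finset.inf_eq_inter] at *
    rw [this, if_pos hi]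
    ring
  · have h1 : I ⊓ ({i} : Finset (Fin n)) = ∅ := by
      rw [Finset.inf_eq_inter, Finset.inter_comm]
      exact Finset.singleton_inter_of_notMem hi
    rw [h1]
    have : symmDiff (I ⊓ J) (∅ : Finset (Fin n)) = I ⊓ J := symmDiff_bot _
    rw [this, if_neg hi, one_mul]
    rfl

lemma neighborFinset_hypercube {n : ℕ} (J : Finset (Fin n)) :
    (hypercube n).neighborFinset J = (univ : Finset (Fin n)).image (fun i => symmDiff J {i}) := by
  ext K
  simp only [SimpleGraph.mem_neighborFinset, Finset.mem_image, Finset.mem_univ, true_and]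
  constructor
  · intro h
    obtain ⟨i, hi⟩ := Finset.card_eq_one.mp h
    exact ⟨i, by rw [← hi, symmDiff_symmDiff_cancel_left]⟩
  · rintro ⟨i, rfl⟩
    show (symmDiff J (symmDiff J {i})).card = 1
    rw [symmDiff_symmDiff_cancel_left, Finset.card_singleton]


/-- For a nonempty proper `I ⊊ [n]`, with `S_I = {J : |I ∩ J| odd}`, the indicator of
`S_I` equals `(1/2)(1 - χ_I)`, where `χ_I` is an eigenfunction of the normalized
adjacency operator with eigenvalue `1 - 2|I|/n`; moreover the indicator is not constant,
so `S_I` is an extremal graphical design (order exactly `1`). -/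
theorem hypercube_odd_intersection_extremal_design (n : ℕ) (hn : 0 < n)
    (I : Finset (Fin n)) (hIne : I.Nonempty) (hIproper : I ≠ univ)
    (A : Matrix (Finset (Fin n)) (Finset (Fin n)) ℝ)
    (hA : A = (n : ℝ)⁻¹ • (hypercube n).adjMatrix ℝ)
    (SI : Finset (Finset (Fin n)))
    (hSI : SI = univ.filter fun J => Odd (I ∩ J).card) :
    (∀ J : Finset (Fin n),
        (if J ∈ SI then (1 : ℝ) else 0) = (1 / 2) * (1 - walshChar I J)) ∧
    A.mulVec (walshChar I) = (1 - 2 * (I.card : ℝ) / (n : ℝ)) • walshChar I ∧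
    ¬ ∃ c : ℝ, ∀ J : Finset (Fin n), (if J ∈ SI then (1 : ℝ) else 0) = c := by
  have hmem : ∀ J : Finset (Fin n), J ∈ SI ↔ Odd (I ∩ J).card := by
    intro J; rw [hSI]; simp
  have hind : ∀ J : Finset (Fin n),
      (if J ∈ SI then (1 : ℝ) else 0) = (1 / 2) * (1 - walshChar I J) := by
    intro J
    by_cases h : J ∈ SI
    · rw [if_pos h]
      have ho := (hmem J).mp h
      unfold walshChar
      rw [Odd.neg_one_pow ho]
      ring
    · rw [if_neg h]
      have he : Even (I ∩ J).card := Nat.not_odd_iff_even.mp (fun ho => h ((hmem J).mpr ho))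
      unfold walshChar
      rw [Even.neg_one_pow he]
      ring
  refine ⟨hind, ?_, ?_⟩
  · funext J
    rw [hA]
    simp only [Matrix.smul_mulVec, Pi.smul_apply,
      SimpleGraph.adjMatrix_mulVec_apply, Pi.smul_apply, smul_eq_mul]
    rw [neighborFinset_hypercube]
    rw [Finset.sum_image (by
      intro x _ y _ h
      have := symmDiff_right_injective J h
      exact Finset.singleton_injective this)]
    have hsum : ∑ i : Fin n, walshChar I (symmDiff J {i})
        = ((n : ℝ) - 2 * I.card) * walshChar I J := by
      simp_rw [walsh_flip]
      rw [← Finset.sum_mul]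
      congr 1
      have hrw : ∀ i : Fin n, (if i ∈ I then (-1 : ℝ) else 1)
          = 1 - 2 * (if i ∈ I then 1 else 0) := by
        intro i; split <;> ring
      simp_rw [hrw]
      rw [Finset.sum_sub_distrib, Finset.sum_const, ← Finset.mul_sum, Finset.sum_boole]
      have : Finset.filter (· ∈ I) Finset.univ = I := by
        ext x; simp
      rw [this]
      simp [Finset.card_univ]
    rw [hsum]
    have hn' : (n : ℝ) ≠ 0 := Nat.cast_ne_zero.mpr hn.ne'
    field_simp
    try ring
  · rintro ⟨c, hc⟩
    obtain ⟨i, hi⟩ := hIne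
    have h1 : ({i} : Finset (Fin n)) ∈ SI := by
      rw [hmem]
      have : I ∩ {i} = {i} := by
        rw [Finset.inter_comm]; exact Finset.singleton_inter_of_mem hi
      rw [this, Finset.card_singleton]; exact odd_one
    have h2 : (∅ : Finset (Fin n)) ∉ SI := by
      rw [hmem, Finset.inter_empty]
      simp
    have e1 := hc {i}
    have e2 := hc ∅
    rw [if_pos h1] at e1
    rw [if_neg h2] at e2
    rw [← e1] at e2
    norm_num at e2
end

section
/- Let G_1, G_2 be finite connected regular graphs and W_1 ⊆ V_1, W_2 ⊆ V_2 graphical designs of orders k_1 and k_2 respectively. Then W_1 × W_2 is a graphical design in the weak product G_1 × G_2 of order at most (k_1+1)(k_2+1) − 1. -/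
open Matrix Finset

/-- The weak (tensor) product of two simple graphs. -/
def weakProd {V₁ V₂ : Type*} (G₁ : SimpleGraph V₁) (G₂ : SimpleGraph V₂) :
    SimpleGraph (V₁ × V₂) where
  Adj p q := G₁.Adj p.1 q.1 ∧ G₂.Adj p.2 q.2
  symm := ⟨fun _ _ h => ⟨G₁.symm.symm _ _ h.1, G₂.symm.symm _ _ h.2⟩⟩
  loopless := ⟨fun p h => G₁.loopless.irrefl p.1 h.1⟩

instance weakProd.instDecidableRelAdj {V₁ V₂ : Type*} (G₁ : SimpleGraph V₁)
    (G₂ : SimpleGraph V₂) [DecidableRel G₁.Adj] [DecidableRel G₂.Adj] :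
    DecidableRel (weakProd G₁ G₂).Adj :=
  fun p q => inferInstanceAs (Decidable (G₁.Adj p.1 q.1 ∧ G₂.Adj p.2 q.2))

/-- `1_W` is a linear combination of the constant function and `k` eigenfunctions of
the operator `A`. A graphical design `W` has order `k` if `k` is minimal with this
property. -/
def IsDesignExpr {V : Type*} [Fintype V] [DecidableEq V] (A : Matrix V V ℝ)
    (W : Finset V) (k : ℕ) : Prop :=
  ∃ (c : ℝ) (f : Fin k → V → ℝ) (a : Fin k → ℝ) (μ : Fin k → ℝ),
    (∀ j, f j ≠ 0 ∧ A.mulVec (f j) = μ j • f j) ∧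
    ∀ v, (if v ∈ W then (1 : ℝ) else 0) = c + ∑ j, a j * f j v

/-- Designs can be indexed by an arbitrary fintype. -/
lemma isDesignExpr_of_fintype {V ι : Type*} [Fintype V] [DecidableEq V] [Fintype ι]
    (A : Matrix V V ℝ) (W : Finset V) (c : ℝ) (f : ι → V → ℝ) (a μ : ι → ℝ)
    (hf : ∀ j, f j ≠ 0 ∧ A.mulVec (f j) = μ j • f j)
    (hW : ∀ v, (if v ∈ W then (1:ℝ) else 0) = c + ∑ j, a j * f j v) :
    IsDesignExpr A W (Fintype.card ι) := by
  let e := Fintype.equivFin ι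
  refine ⟨c, fun i => f (e.symm i), fun i => a (e.symm i), fun i => μ (e.symm i),
    fun i => hf _, fun v => ?_⟩
  rw [hW v]
  congr 1
  exact (Equiv.sum_comp e.symm (fun j => a j * f j v)).symm

/-- Tensor computation for the normalized adjacency of the weak product. -/
lemma weakProd_mulVec_tensor {V₁ V₂ : Type*} [Fintype V₁] [Fintype V₂]
    (G₁ : SimpleGraph V₁) (G₂ : SimpleGraph V₂)
    [DecidableRel G₁.Adj] [DecidableRel G₂.Adj] (d₁ d₂ : ℕ)
    (g₁ : V₁ → ℝ) (g₂ : V₂ → ℝ) (v : V₁ × V₂) :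
    (((d₁ * d₂ : ℕ) : ℝ)⁻¹ • (weakProd G₁ G₂).adjMatrix ℝ).mulVec
      (fun w => g₁ w.1 * g₂ w.2) v =
    ((d₁ : ℝ)⁻¹ • G₁.adjMatrix ℝ).mulVec g₁ v.1 *
      ((d₂ : ℝ)⁻¹ • G₂.adjMatrix ℝ).mulVec g₂ v.2 := by
  simp only [Matrix.mulVec, dotProduct, Matrix.smul_apply,
    SimpleGraph.adjMatrix_apply, smul_eq_mul]
  rw [Fintype.sum_prod_type, Finset.sum_mul_sum]
  refine Finset.sum_congr rfl fun w₁ _ => Finset.sum_congr rfl fun w₂ _ => ?_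
  have hadj : (weakProd G₁ G₂).Adj v (w₁, w₂) ↔ G₁.Adj v.1 w₁ ∧ G₂.Adj v.2 w₂ := Iff.rfl
  push_cast
  by_cases h1 : G₁.Adj v.1 w₁ <;> by_cases h2 : G₂.Adj v.2 w₂ <;>
    simp [hadj, h1, h2, mul_inv] <;> ring

/-- The constant function is an eigenfunction of the normalized adjacency matrix
of a regular graph. -/
lemma const_eigen {V : Type*} [Fintype V] (G : SimpleGraph V) [DecidableRel G.Adj]
    (d : ℕ) (hreg : G.IsRegularOfDegree d) :
    ((d : ℝ)⁻¹ • G.adjMatrix ℝ).mulVec (fun _ => 1)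
      = (if d = 0 then (0:ℝ) else 1) • (fun _ => (1:ℝ)) := by
  funext v
  have h1 : ((G.adjMatrix ℝ) *ᵥ fun _ => (1:ℝ)) v = (d : ℝ) := by
    have := SimpleGraph.adjMatrix_mulVec_const_apply_of_regular (α := ℝ) (a := (1:ℝ)) hreg (v := v)
    simpa using this
  rw [Matrix.smul_mulVec]
  simp only [Pi.smul_apply, h1, smul_eq_mul]
  by_cases hd : d = 0
  · simp [hd]
  · simp only [hd, if_false, one_mul]
    field_simp

/-- If `W₁`, `W₂` are graphical designs of orders `k₁`, `k₂` in the connected regular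
graphs `G₁`, `G₂`, then `W₁ × W₂` is a graphical design of order at most
`(k₁+1)(k₂+1) - 1` in the weak product `G₁ × G₂`. -/
theorem weakProd_design_order {V₁ V₂ : Type*} [Fintype V₁] [Fintype V₂]
    [DecidableEq V₁] [DecidableEq V₂]
    (G₁ : SimpleGraph V₁) (G₂ : SimpleGraph V₂)
    [DecidableRel G₁.Adj] [DecidableRel G₂.Adj]
    (hconn₁ : G₁.Connected) (hconn₂ : G₂.Connected)
    (d₁ d₂ : ℕ) (hreg₁ : G₁.IsRegularOfDegree d₁) (hreg₂ : G₂.IsRegularOfDegree d₂)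
    (A₁ : Matrix V₁ V₁ ℝ) (hA₁ : A₁ = (d₁ : ℝ)⁻¹ • G₁.adjMatrix ℝ)
    (A₂ : Matrix V₂ V₂ ℝ) (hA₂ : A₂ = (d₂ : ℝ)⁻¹ • G₂.adjMatrix ℝ)
    (A : Matrix (V₁ × V₂) (V₁ × V₂) ℝ)
    (hA : A = ((d₁ * d₂ : ℕ) : ℝ)⁻¹ • (weakProd G₁ G₂).adjMatrix ℝ)
    (W₁ : Finset V₁) (W₂ : Finset V₂) (k₁ k₂ : ℕ)
    (h₁ : IsDesignExpr A₁ W₁ k₁) (h₁min : ∀ m < k₁, ¬ IsDesignExpr A₁ W₁ m)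
    (h₂ : IsDesignExpr A₂ W₂ k₂) (h₂min : ∀ m < k₂, ¬ IsDesignExpr A₂ W₂ m) :
    ∃ m ≤ (k₁ + 1) * (k₂ + 1) - 1, IsDesignExpr A (W₁ ×ˢ W₂) m := by
  obtain ⟨c₁, f₁, a₁, μ₁, hf₁, hW₁⟩ := h₁
  obtain ⟨c₂, f₂, a₂, μ₂, hf₂, hW₂⟩ := h₂
  have hne₁ : Nonempty V₁ := hconn₁.nonempty
  have hne₂ : Nonempty V₂ := hconn₂.nonempty
  -- extended families including the constant function at index 0
  set F₁ : Fin (k₁+1) → V₁ → ℝ := Fin.cons (fun _ => 1) f₁ with hF₁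
  set M₁ : Fin (k₁+1) → ℝ := Fin.cons (if d₁ = 0 then 0 else 1) μ₁ with hM₁
  set B₁ : Fin (k₁+1) → ℝ := Fin.cons c₁ a₁ with hB₁
  set F₂ : Fin (k₂+1) → V₂ → ℝ := Fin.cons (fun _ => 1) f₂ with hF₂
  set M₂ : Fin (k₂+1) → ℝ := Fin.cons (if d₂ = 0 then 0 else 1) μ₂ with hM₂
  set B₂ : Fin (k₂+1) → ℝ := Fin.cons c₂ a₂ with hB₂
  have hE₁ : ∀ i, F₁ i ≠ 0 ∧ A₁.mulVec (F₁ i) = M₁ i • F₁ i := by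
    intro i
    refine Fin.cases ?_ (fun j => ?_) i
    · refine ⟨?_, ?_⟩
      · intro h
        have := congrFun h (Classical.arbitrary V₁)
        simp [hF₁] at this
      · rw [hA₁]
        simpa [hF₁, hM₁] using const_eigen G₁ d₁ hreg₁
    · simpa [hF₁, hM₁] using hf₁ j
  have hE₂ : ∀ i, F₂ i ≠ 0 ∧ A₂.mulVec (F₂ i) = M₂ i • F₂ i := by
    intro i
    refine Fin.cases ?_ (fun j => ?_) i
    · refine ⟨?_, ?_⟩
      · intro h
        have := congrFun h (Classical.arbitrary V₂)
        simp [hF₂] at this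
      · rw [hA₂]
        simpa [hF₂, hM₂] using const_eigen G₂ d₂ hreg₂
    · simpa [hF₂, hM₂] using hf₂ j
  have hind₁ : ∀ v, (if v ∈ W₁ then (1:ℝ) else 0) = ∑ i, B₁ i * F₁ i v := by
    intro v
    rw [Fin.sum_univ_succ]
    simpa [hF₁, hB₁] using hW₁ v
  have hind₂ : ∀ v, (if v ∈ W₂ then (1:ℝ) else 0) = ∑ i, B₂ i * F₂ i v := by
    intro v
    rw [Fin.sum_univ_succ]
    simpa [hF₂, hB₂] using hW₂ v
  -- index type
  set z : Fin (k₁+1) × Fin (k₂+1) := (0, 0) with hz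
  have hcard : Fintype.card {p : Fin (k₁+1) × Fin (k₂+1) // p ≠ z}
      = (k₁+1)*(k₂+1) - 1 := by
    simp [Fintype.card_subtype_compl]
  refine ⟨Fintype.card {p : Fin (k₁+1) × Fin (k₂+1) // p ≠ z}, hcard.le, ?_⟩
  refine isDesignExpr_of_fintype A (W₁ ×ˢ W₂) (c₁ * c₂)
    (fun p v => F₁ p.1.1 v.1 * F₂ p.1.2 v.2)
    (fun p => B₁ p.1.1 * B₂ p.1.2) (fun p => M₁ p.1.1 * M₂ p.1.2) ?_ ?_
  · rintro ⟨⟨i, j⟩, hp⟩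
    constructor
    · obtain ⟨v₁, hv₁⟩ := Function.ne_iff.mp (hE₁ i).1
      obtain ⟨v₂, hv₂⟩ := Function.ne_iff.mp (hE₂ j).1
      intro h
      have := congrFun h (v₁, v₂)
      simp only [Pi.zero_apply] at this hv₁ hv₂
      exact mul_ne_zero hv₁ hv₂ this
    · funext v
      rw [hA, weakProd_mulVec_tensor, ← hA₁, ← hA₂, (hE₁ i).2, (hE₂ j).2]
      simp only [Pi.smul_apply, smul_eq_mul]
      ring
  · intro v
    have hsplit : (if v ∈ W₁ ×ˢ W₂ then (1:ℝ) else 0)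
        = (if v.1 ∈ W₁ then (1:ℝ) else 0) * (if v.2 ∈ W₂ then (1:ℝ) else 0) := by
      by_cases h1 : v.1 ∈ W₁ <;> by_cases h2 : v.2 ∈ W₂ <;>
        simp [Finset.mem_product, h1, h2]
    rw [hsplit, hind₁, hind₂, show (∑ i, B₁ i * F₁ i v.1) * (∑ j, B₂ j * F₂ j v.2)
        = ∑ p : Fin (k₁+1) × Fin (k₂+1), B₁ p.1 * F₁ p.1 v.1 * (B₂ p.2 * F₂ p.2 v.2) from by
      rw [Fintype.sum_prod_type]; exact Finset.sum_mul_sum _ _ _ _]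
    have hsum : ∑ p : Fin (k₁+1) × Fin (k₂+1),
        B₁ p.1 * F₁ p.1 v.1 * (B₂ p.2 * F₂ p.2 v.2)
        = B₁ z.1 * F₁ z.1 v.1 * (B₂ z.2 * F₂ z.2 v.2)
          + ∑ p ∈ univ.erase z, B₁ p.1 * F₁ p.1 v.1 * (B₂ p.2 * F₂ p.2 v.2) :=
      (Finset.add_sum_erase univ _ (mem_univ z)).symm
    rw [hsum]
    congr 1
    · simp [hz, hF₁, hF₂, hB₁, hB₂]
    · have hmem : ∀ p : Fin (k₁+1) × Fin (k₂+1), p ∈ univ.erase z ↔ p ≠ z := by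
        intro p; simp [Finset.mem_erase]
      rw [Finset.sum_subtype (univ.erase z) hmem
        (fun p => B₁ p.1 * F₁ p.1 v.1 * (B₂ p.2 * F₂ p.2 v.2))]
      refine Finset.sum_congr rfl fun p _ => by ring
end

section
/- Let G_1, G_2 be finite connected regular graphs and W_1 ⊆ V_1 a graphical design of order k_1 in G_1. Then W_1 × V_2 is a graphical design of order at most k_1 in the weak product G_1 × G_2. -/
open Matrix Finset

/-- If `W₁` is a graphical design of order `k₁` in the connected regular graph `G₁`, then
`W₁ × V₂` is a graphical design of order at most `k₁` in the weak product `G₁ × G₂`. -/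
theorem weakProd_design_cylinder {V₁ V₂ : Type*} [Fintype V₁] [Fintype V₂]
    [DecidableEq V₁] [DecidableEq V₂]
    (G₁ : SimpleGraph V₁) (G₂ : SimpleGraph V₂)
    [DecidableRel G₁.Adj] [DecidableRel G₂.Adj]
    (hconn₁ : G₁.Connected) (hconn₂ : G₂.Connected)
    (d₁ d₂ : ℕ) (hreg₁ : G₁.IsRegularOfDegree d₁) (hreg₂ : G₂.IsRegularOfDegree d₂)
    (A₁ : Matrix V₁ V₁ ℝ) (hA₁ : A₁ = (d₁ : ℝ)⁻¹ • G₁.adjMatrix ℝ)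
    (A : Matrix (V₁ × V₂) (V₁ × V₂) ℝ)
    (hA : A = ((d₁ * d₂ : ℕ) : ℝ)⁻¹ • (weakProd G₁ G₂).adjMatrix ℝ)
    (W₁ : Finset V₁) (k₁ : ℕ)
    (h₁ : IsDesignExpr A₁ W₁ k₁) (h₁min : ∀ m < k₁, ¬ IsDesignExpr A₁ W₁ m) :
    ∃ m ≤ k₁, IsDesignExpr A (W₁ ×ˢ (univ : Finset V₂)) m := by
  obtain ⟨c, f, a, μ, hf, hsum⟩ := h₁
  haveI : Nonempty V₂ := hconn₂.nonempty
  refine ⟨k₁, le_rfl, ?_⟩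
  -- key computation
  have key : ∀ g : V₁ → ℝ,
      ((weakProd G₁ G₂).adjMatrix ℝ).mulVec (fun p : V₁ × V₂ => g p.1)
        = fun p : V₁ × V₂ => (d₂ : ℝ) * ((G₁.adjMatrix ℝ).mulVec g p.1) := by
    intro g
    funext p
    simp only [Matrix.mulVec, dotProduct, SimpleGraph.adjMatrix_apply,
      Fintype.sum_prod_type]
    rw [Finset.mul_sum]
    refine Finset.sum_congr rfl fun q₁ _ => ?_
    have h1 : ∀ q₂ : V₂,
        (if (weakProd G₁ G₂).Adj p (q₁, q₂) then (1 : ℝ) else 0) * g q₁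
          = (if G₂.Adj p.2 q₂ then (1 : ℝ) else 0) *
            ((if G₁.Adj p.1 q₁ then (1 : ℝ) else 0) * g q₁) := by
      intro q₂
      show (if G₁.Adj p.1 q₁ ∧ G₂.Adj p.2 q₂ then (1 : ℝ) else 0) * g q₁ = _
      by_cases hb : G₁.Adj p.1 q₁ <;> by_cases hc : G₂.Adj p.2 q₂ <;>
        simp [hb, hc]
    rw [Finset.sum_congr rfl fun q₂ _ => h1 q₂, ← Finset.sum_mul]
    have hdeg : ∑ q₂ : V₂, (if G₂.Adj p.2 q₂ then (1 : ℝ) else 0) = (d₂ : ℝ) := by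
      rw [Finset.sum_boole]
      have : (Finset.univ.filter fun q₂ => G₂.Adj p.2 q₂) = G₂.neighborFinset p.2 := by
        ext x; simp [SimpleGraph.mem_neighborFinset]
      rw [this]
      exact_mod_cast congrArg (Nat.cast (R := ℝ)) (hreg₂ p.2)
    rw [hdeg]
  refine ⟨c, fun j p => f j p.1, a, fun j => if (d₁ : ℝ) * d₂ = 0 then 0 else μ j,
    fun j => ⟨?_, ?_⟩, ?_⟩
  · -- nonzero
    obtain ⟨v, hv⟩ := Function.ne_iff.mp (hf j).1
    obtain ⟨w⟩ := ‹Nonempty V₂›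
    intro h0
    exact hv (congrFun h0 (v, w))
  · -- eigenfunction
    by_cases hd : (d₁ : ℝ) * d₂ = 0
    · have hA0 : A = 0 := by
        rw [hA]
        have : ((d₁ * d₂ : ℕ) : ℝ) = 0 := by push_cast; exact hd
        rw [this, _root_.inv_zero, zero_smul]
      simp [hA0, Matrix.zero_mulVec, hd]
    · have hd₁ : (d₁ : ℝ) ≠ 0 := fun h => hd (by rw [h, zero_mul])
      have heig : (G₁.adjMatrix ℝ).mulVec (f j) = (d₁ : ℝ) • (μ j • f j) := by
        have := (hf j).2
        rw [hA₁, Matrix.smul_mulVec] at this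
        rw [← this, smul_inv_smul₀ hd₁]
      rw [hA, Matrix.smul_mulVec, key]
      simp only [if_neg hd]
      funext p
      simp only [Pi.smul_apply, smul_eq_mul, heig]
      push_cast
      field_simp
      have hd₂ : (d₂ : ℝ) ≠ 0 := fun h => hd (by rw [h, mul_zero])
      rw [mul_assoc, mul_div_cancel_left₀ _ hd₂]
  · intro p
    have := hsum p.1
    simpa [Finset.mem_product] using this
end
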